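/- arXiv:2601.03094 — 4 statements merged into one kernel-verified Lean document; each statement's English description precedes it below -/
import Mathlib

section
/- Let V be a nonzero real vector space carrying a quaternionic triple (J₁, J₂, J₃) and let γ₁, γ₂, γ₃ : V → ℝ be linear functionals. Define the ℝ-bilinear map φ : V × V → V by φ(X,Y) := γ₁(X)·J₁(Y) + γ₂(X)·J₂(Y) + γ₃(X)·J₃(Y). Then for every cyclic permutation (a,b,c) of (1,2,3) and all X, Y ∈ V, π_{J_a}(φ)(X,Y) = −(1/2)(ψ_a(X)·J_b(Y) + ψ_a(J_a X)·J_c(Y)), where ψ_a : V → ℝ is the linear functional ψ_a := γ_c∘J_a − γ_b. -/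
/-- The projection `π_J(φ)(X,Y) := (1/4)(φ(X,Y) + J(φ(JX,Y)) + J(φ(X,JY)) − φ(JX,JY))`
associated with a complex structure `J` and a bilinear map `φ`. -/
noncomputable def piJ {V : Type*} [AddCommGroup V] [Module ℝ V]
    (J : Module.End ℝ V) (φ : V → V → V) (X Y : V) : V :=
  (1/4 : ℝ) • (φ X Y + J (φ (J X) Y) + J (φ X (J Y)) - φ (J X) (J Y))

lemma key_piJ {V : Type*} [AddCommGroup V] [Module ℝ V]
    (Ja Jb Jc : Module.End ℝ V)
    (haa : Ja * Ja = -1) (hab : Ja * Jb = Jc) (hba : Jb * Ja = -Jc)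
    (hac : Ja * Jc = -Jb) (hca : Jc * Ja = Jb)
    (γa γb γc : V →ₗ[ℝ] ℝ) (φ : V → V → V)
    (hφ : ∀ X Y, φ X Y = γa X • Ja Y + γb X • Jb Y + γc X • Jc Y)
    (X Y : V) :
    piJ Ja φ X Y
      = -((1/2 : ℝ) • (((γc ∘ₗ Ja - γb) : V →ₗ[ℝ] ℝ) X • Jb Y
        + ((γc ∘ₗ Ja - γb) : V →ₗ[ℝ] ℝ) (Ja X) • Jc Y)) := by
  have paa : ∀ v, Ja (Ja v) = -v := fun v => by
    have := LinearMap.ext_iff.mp haa v; simpa using this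
  have pab : ∀ v, Ja (Jb v) = Jc v := fun v => by
    have := LinearMap.ext_iff.mp hab v; simpa using this
  have pba : ∀ v, Jb (Ja v) = -(Jc v) := fun v => by
    have := LinearMap.ext_iff.mp hba v; simpa using this
  have pac : ∀ v, Ja (Jc v) = -(Jb v) := fun v => by
    have := LinearMap.ext_iff.mp hac v; simpa using this
  have pca : ∀ v, Jc (Ja v) = Jb v := fun v => by
    have := LinearMap.ext_iff.mp hca v; simpa using this
  unfold piJ
  simp only [hφ, map_add, map_smul, LinearMap.sub_apply, LinearMap.comp_apply,
    paa, pab, pba, pac, pca, map_neg]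
  module

theorem stmt_1 {V : Type*} [AddCommGroup V] [Module ℝ V] [Nontrivial V]
    (J₁ J₂ J₃ : Module.End ℝ V)
    (h11 : J₁ * J₁ = -1) (h22 : J₂ * J₂ = -1) (h33 : J₃ * J₃ = -1)
    (h12 : J₁ * J₂ = J₃) (h21 : J₂ * J₁ = -J₃)
    (h23 : J₂ * J₃ = J₁) (h32 : J₃ * J₂ = -J₁)
    (h31 : J₃ * J₁ = J₂) (h13 : J₁ * J₃ = -J₂)
    (γ₁ γ₂ γ₃ : V →ₗ[ℝ] ℝ)
    (φ : V → V → V)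
    (hφ : ∀ X Y, φ X Y = γ₁ X • J₁ Y + γ₂ X • J₂ Y + γ₃ X • J₃ Y)
    (Ja Jb Jc : Module.End ℝ V) (γa γb γc : V →ₗ[ℝ] ℝ)
    (hcyc : (Ja, Jb, Jc, γa, γb, γc) = (J₁, J₂, J₃, γ₁, γ₂, γ₃) ∨
      (Ja, Jb, Jc, γa, γb, γc) = (J₂, J₃, J₁, γ₂, γ₃, γ₁) ∨
      (Ja, Jb, Jc, γa, γb, γc) = (J₃, J₁, J₂, γ₃, γ₁, γ₂))
    (ψa : V →ₗ[ℝ] ℝ) (hψa : ψa = γc ∘ₗ Ja - γb) (X Y : V) :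
    piJ Ja φ X Y = -((1/2 : ℝ) • (ψa X • Jb Y + ψa (Ja X) • Jc Y)) := by
  subst hψa
  rcases hcyc with h | h | h <;>
    simp only [Prod.mk.injEq] at h <;>
    obtain ⟨rfl, rfl, rfl, rfl, rfl, rfl⟩ := h
  · exact key_piJ Ja Jb Jc h11 h12 h21 h13 h31 γa γb γc φ hφ X Y
  · exact key_piJ Ja Jb Jc h22 h23 h32 h21 h12 γa γb γc φ
      (fun X Y => by rw [hφ]; abel) X Y
  · exact key_piJ Ja Jb Jc h33 h31 h13 h32 h23 γa γb γc φ
      (fun X Y => by rw [hφ]; abel) X Y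
end

section
/- Let V be a real vector space carrying a quaternionic triple (J₁, J₂, J₃), let (a,b,c) be a cyclic permutation of (1,2,3), let W ⊆ V be a subspace with J_a(W) = W and with dim W ≥ 3 (finite rank at least 3), and let ψ : V → ℝ be a linear functional. Then the identity ψ(X)·J_b(Y) + ψ(J_a X)·J_c(Y) − ψ(Y)·J_b(X) − ψ(J_a Y)·J_c(X) = 0 holds for all X, Y ∈ W if and only if ψ(X) = 0 for all X ∈ W. -/
theorem stmt_4 {V : Type*} [AddCommGroup V] [Module ℝ V]
    (J₁ J₂ J₃ : Module.End ℝ V)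
    (h11 : J₁ * J₁ = -1) (h22 : J₂ * J₂ = -1) (h33 : J₃ * J₃ = -1)
    (h12 : J₁ * J₂ = J₃) (h21 : J₂ * J₁ = -J₃)
    (h23 : J₂ * J₃ = J₁) (h32 : J₃ * J₂ = -J₁)
    (h31 : J₃ * J₁ = J₂) (h13 : J₁ * J₃ = -J₂)
    (Ja Jb Jc : Module.End ℝ V)
    (hcyc : (Ja, Jb, Jc) = (J₁, J₂, J₃) ∨ (Ja, Jb, Jc) = (J₂, J₃, J₁) ∨
      (Ja, Jb, Jc) = (J₃, J₁, J₂))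
    (W : Submodule ℝ V) (hW : W.map Ja = W) (hdim : 3 ≤ Module.rank ℝ W)
    (ψ : V →ₗ[ℝ] ℝ) :
    (∀ X ∈ W, ∀ Y ∈ W,
        ψ X • Jb Y + ψ (Ja X) • Jc Y - ψ Y • Jb X - ψ (Ja Y) • Jc X = 0) ↔
      (∀ X ∈ W, ψ X = 0) := by
  -- basic algebraic facts about Ja, Jb, Jc
  have ha2 : Ja * Ja = -1 := by
    rcases hcyc with h | h | h <;> (simp only [Prod.mk.injEq] at h) <;>
      simp [h.1, h11, h22, h33]
  have hb2 : Jb * Jb = -1 := by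
    rcases hcyc with h | h | h <;> (simp only [Prod.mk.injEq] at h) <;>
      simp [h.2.1, h11, h22, h33]
  have hbc : Jb * Jc = Ja := by
    rcases hcyc with h | h | h <;> (simp only [Prod.mk.injEq] at h) <;>
      simp [h.1, h.2.1, h.2.2, h12, h23, h31]
  have haW : ∀ x ∈ W, Ja x ∈ W := by
    intro x hx
    rw [← hW]
    exact ⟨x, hx, rfl⟩
  have hJbJb : ∀ v : V, Jb (Jb v) = -v := by
    intro v
    have := congrFun (congrArg (DFunLike.coe) hb2) v
    simpa using this
  have hJbJc : ∀ v : V, Jb (Jc v) = Ja v := by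
    intro v
    have := congrFun (congrArg (DFunLike.coe) hbc) v
    simpa using this
  have hJaJa : ∀ v : V, Ja (Ja v) = -v := by
    intro v
    have := congrFun (congrArg (DFunLike.coe) ha2) v
    simpa using this
  constructor
  · intro H X hX
    by_contra hne
    -- key identity obtained by applying Jb
    have key : ∀ Y ∈ W,
        ψ X • Y = ψ (Ja X) • Ja Y + ψ Y • X - ψ (Ja Y) • Ja X := by
      intro Y hY
      have h0 := H X hX Y hY
      have h1 := congrArg Jb h0
      simp only [map_add, map_sub, map_smul, map_zero, hJbJb, hJbJc,
        smul_neg] at h1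
      linear_combination (norm := module) -h1
    -- every Y in W lies in the span of {X, Ja X}
    have hsub : W ≤ Submodule.span ℝ {X, Ja X} := by
      intro Y hY
      have k1 := key Y hY
      have k2 := key (Ja Y) (haW Y hY)
      rw [hJaJa Y] at k2
      simp only [map_neg] at k2
      -- k2 : ψ X • Ja Y = ψ (Ja X) • (-Y) + ψ (Ja Y) • X - (-ψ Y) • Ja X
      have lam : (ψ X * ψ X + ψ (Ja X) * ψ (Ja X)) • Y =
          (ψ (Ja X) * ψ (Ja Y) + ψ X * ψ Y) • X +
          (ψ (Ja X) * ψ Y - ψ X * ψ (Ja Y)) • Ja X := by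
        linear_combination (norm := module) ψ X • k1 + ψ (Ja X) • k2
      have hlam : ψ X * ψ X + ψ (Ja X) * ψ (Ja X) ≠ 0 := by
        have h1 := mul_self_pos.mpr hne
        nlinarith [mul_self_nonneg (ψ (Ja X))]
      have hXm : X ∈ Submodule.span ℝ ({X, Ja X} : Set V) :=
        Submodule.subset_span (by simp)
      have hJXm : Ja X ∈ Submodule.span ℝ ({X, Ja X} : Set V) :=
        Submodule.subset_span (by simp)
      have hYeq : Y = (ψ X * ψ X + ψ (Ja X) * ψ (Ja X))⁻¹ •
          ((ψ (Ja X) * ψ (Ja Y) + ψ X * ψ Y) • X +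
           (ψ (Ja X) * ψ Y - ψ X * ψ (Ja Y)) • Ja X) := by
        rw [← lam, inv_smul_smul₀ hlam]
      rw [hYeq]
      exact Submodule.smul_mem _ _ (Submodule.add_mem _
        (Submodule.smul_mem _ _ hXm) (Submodule.smul_mem _ _ hJXm))
    have h2 : Module.rank ℝ W ≤ 2 := by
      calc Module.rank ℝ W ≤ Module.rank ℝ (Submodule.span ℝ {X, Ja X}) :=
            Submodule.rank_mono hsub
        _ ≤ 2 := by
            refine (rank_span_le _).trans ?_
            have : ({X, Ja X} : Set V) = insert X {Ja X} := rfl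
            rw [this]
            refine (Cardinal.mk_insert_le).trans ?_
            simp
            norm_num
    exact absurd (hdim.trans h2) (by norm_num)
  · intro H X hX Y hY
    rw [H X hX, H Y hY, H _ (haW X hX), H _ (haW Y hY)]
    simp
end

section
/- Let V be a real vector space, let J be a complex structure on V, let W ⊆ V be a subspace with J(W) = W, and let ψ : V → ℝ be a linear functional whose restriction to W is not identically zero. For X, Y ∈ V set V^ψ_{X,Y} := ψ(X)·Y − ψ(JX)·J(Y) − ψ(Y)·X + ψ(JY)·J(X). Suppose S ⊆ V is a subspace such that V^ψ_{X,Y} ∈ S for all X, Y ∈ W. Then every Y ∈ W with ψ(Y) = 0 and ψ(JY) = 0 belongs to S; that is, W ∩ ker ψ ∩ ker(ψ∘J) ⊆ S. -/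
theorem stmt_9 {V : Type*} [AddCommGroup V] [Module ℝ V]
    (J : Module.End ℝ V) (hJ : J * J = -1)
    (W : Submodule ℝ V) (hW : W.map J = W)
    (ψ : V →ₗ[ℝ] ℝ) (hψW : ∃ X ∈ W, ψ X ≠ 0)
    (Vψ : V → V → V)
    (hVψ : ∀ X Y, Vψ X Y = ψ X • Y - ψ (J X) • J Y - ψ Y • X + ψ (J Y) • J X)
    (S : Submodule ℝ V)
    (hS : ∀ X ∈ W, ∀ Y ∈ W, Vψ X Y ∈ S) :
    ∀ Y ∈ W, ψ Y = 0 → ψ (J Y) = 0 → Y ∈ S := by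
  obtain ⟨X, hXW, hX⟩ := hψW
  intro Y hYW h1 h2
  have hJYW : J Y ∈ W := by
    rw [← hW]; exact Submodule.mem_map_of_mem hYW
  have hJJ : ∀ v : V, J (J v) = -v := fun v => by
    have : (J * J) v = (-1 : Module.End ℝ V) v := by rw [hJ]
    simpa using this
  have hA := hS X hXW Y hYW
  have hB := hS X hXW (J Y) hJYW
  have key : (ψ X ^ 2 + ψ (J X) ^ 2) • Y = ψ X • Vψ X Y + ψ (J X) • Vψ X (J Y) := by
    rw [hVψ, hVψ, hJJ Y, h1, h2]
    simp only [map_neg, smul_neg, neg_smul, h1]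
    module
  have hne : ψ X ^ 2 + ψ (J X) ^ 2 ≠ 0 := by positivity
  have : (ψ X ^ 2 + ψ (J X) ^ 2) • Y ∈ S := key ▸ S.add_mem (S.smul_mem _ hA) (S.smul_mem _ hB)
  have := S.smul_mem (ψ X ^ 2 + ψ (J X) ^ 2)⁻¹ this
  rwa [inv_smul_smul₀ hne] at this
end

section
/- Let V be a real vector space, let ω be a nondegenerate alternating bilinear form on V, and let (J₁, J₂, J₃) be a quaternionic triple on V such that ω(J_a X, J_a Y) = ω(X, Y) for all X, Y ∈ V and a = 1, 2, 3. Let W ⊆ V be a subspace with J₁(W) = W, and let γ₂, γ₃ : V → ℝ be linear functionals. Then the following two conditions are equivalent: (A) for all X, Y ∈ W, the vector γ₃(X)·J₂(Y) − γ₂(X)·J₃(Y) lies in the ω-orthogonal complement W^{⊥ω}; (B) either γ₂ and γ₃ both vanish identically on W, or J₂(W) ⊆ W^{⊥ω}. -/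
/-- The `ω`-orthogonal complement `W^{⊥ω} = {u ∈ V : ω(u, w) = 0 for all w ∈ W}`
of a subspace `W` with respect to a bilinear form `ω`. -/
def omegaPerp {V : Type*} [AddCommGroup V] [Module ℝ V]
    (ω : V →ₗ[ℝ] V →ₗ[ℝ] ℝ) (W : Submodule ℝ V) : Submodule ℝ V where
  carrier := {u | ∀ w ∈ W, ω u w = 0}
  add_mem' := by
    intro a b ha hb w hw
    simp [ha w hw, hb w hw]
  zero_mem' := by
    intro w hw
    simp
  smul_mem' := by
    intro c a ha w hw
    simp [ha w hw]

theorem stmt_12 {V : Type*} [AddCommGroup V] [Module ℝ V]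
    (ω : V →ₗ[ℝ] V →ₗ[ℝ] ℝ)
    (halt : ∀ X, ω X X = 0)
    (hnd : ∀ u, (∀ v, ω u v = 0) → u = 0)
    (J₁ J₂ J₃ : Module.End ℝ V)
    (h11 : J₁ * J₁ = -1) (h22 : J₂ * J₂ = -1) (h33 : J₃ * J₃ = -1)
    (h12 : J₁ * J₂ = J₃) (h21 : J₂ * J₁ = -J₃)
    (h23 : J₂ * J₃ = J₁) (h32 : J₃ * J₂ = -J₁)
    (h31 : J₃ * J₁ = J₂) (h13 : J₁ * J₃ = -J₂)
    (hinv1 : ∀ X Y, ω (J₁ X) (J₁ Y) = ω X Y)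
    (hinv2 : ∀ X Y, ω (J₂ X) (J₂ Y) = ω X Y)
    (hinv3 : ∀ X Y, ω (J₃ X) (J₃ Y) = ω X Y)
    (W : Submodule ℝ V) (hW : W.map J₁ = W)
    (γ₂ γ₃ : V →ₗ[ℝ] ℝ) :
    (∀ X ∈ W, ∀ Y ∈ W, γ₃ X • J₂ Y - γ₂ X • J₃ Y ∈ omegaPerp ω W) ↔
      (((∀ X ∈ W, γ₂ X = 0) ∧ (∀ X ∈ W, γ₃ X = 0)) ∨
        W.map J₂ ≤ omegaPerp ω W) := by
  have mem_perp : ∀ u, u ∈ omegaPerp ω W ↔ ∀ w ∈ W, ω u w = 0 := fun u => Iff.rfl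
  have e12 : ∀ X, J₁ (J₂ X) = J₃ X := fun X => by
    have := DFunLike.congr_fun h12 X; simpa [Module.End.mul_apply] using this
  have e11 : ∀ X, J₁ (J₁ X) = -X := fun X => by
    have := DFunLike.congr_fun h11 X; simpa [Module.End.mul_apply] using this
  have hmem1 : ∀ Z ∈ W, J₁ Z ∈ W := fun Z hZ => hW ▸ Submodule.mem_map_of_mem hZ
  have key : ∀ Y Z, ω (J₃ Y) Z = ω (J₂ Y) (-(J₁ Z)) := by
    intro Y Z
    have h : ω (J₁ (J₂ Y)) (J₁ (-(J₁ Z))) = ω (J₂ Y) (-(J₁ Z)) := hinv1 _ _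
    rw [map_neg, e11, neg_neg, e12] at h
    exact h
  constructor
  · intro hA
    by_cases hperp : W.map J₂ ≤ omegaPerp ω W
    · exact Or.inr hperp
    left
    obtain ⟨u, hu, hnp⟩ := SetLike.not_le_iff_exists.mp hperp
    clear hperp
    obtain ⟨Y₀, hY₀, rfl⟩ := Submodule.mem_map.mp hu
    rw [mem_perp] at hnp
    push_neg at hnp
    obtain ⟨Z₀, hZ₀, hc⟩ := hnp
    have hAeq : ∀ X ∈ W, ∀ Y ∈ W, ∀ Z ∈ W,
        γ₃ X * ω (J₂ Y) Z - γ₂ X * ω (J₃ Y) Z = 0 := by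
      intro X hX Y hY Z hZ
      have := (mem_perp _).mp (hA X hX Y hY) Z hZ
      simpa [smul_eq_mul] using this
    have h2 : ∀ X ∈ W, γ₂ X = 0 := by
      intro X hX
      by_contra hne
      set k := γ₃ X / γ₂ X with hk
      have hrel : ∀ Y ∈ W, ∀ Z ∈ W, ω (J₃ Y) Z = k * ω (J₂ Y) Z := by
        intro Y hY Z hZ
        have h := hAeq X hX Y hY Z hZ
        rw [hk]
        field_simp
        linear_combination -h
      have hstep : ∀ Z ∈ W, ω (J₂ Y₀) (-(J₁ Z)) = k * ω (J₂ Y₀) Z := by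
        intro Z hZ
        rw [← key]; exact hrel Y₀ hY₀ Z hZ
      have h1 := hstep Z₀ hZ₀
      have h2' := hstep (-(J₁ Z₀)) (W.neg_mem (hmem1 Z₀ hZ₀))
      simp only [map_neg, e11, neg_neg] at h1 h2'
      -- h1 : -(ω (J₂ Y₀) (J₁ Z₀)) = k * ω (J₂ Y₀) Z₀
      -- h2' : -(ω (J₂ Y₀) Z₀) = k * -(ω (J₂ Y₀) (J₁ Z₀))  (up to sign arrangement)
      have hzero : (1 + k ^ 2) * ω (J₂ Y₀) Z₀ = 0 := by linear_combination -h2' - k * h1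
      have hpos : (1 : ℝ) + k ^ 2 ≠ 0 := by positivity
      exact hc ((mul_eq_zero.mp hzero).resolve_left hpos)
    refine ⟨h2, fun X hX => ?_⟩
    have h := hAeq X hX Y₀ hY₀ Z₀ hZ₀
    rw [h2 X hX] at h
    have h' : γ₃ X * ω (J₂ Y₀) Z₀ = 0 := by linear_combination h
    exact (mul_eq_zero.mp h').resolve_right hc
  · rintro (⟨h2, h3⟩ | hperp)
    · intro X hX Y hY
      rw [mem_perp]
      intro w hw
      simp [h2 X hX, h3 X hX]
    · intro X hX Y hY
      rw [mem_perp]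
      intro w hw
      have hb : ω (J₂ Y) w = 0 :=
        (mem_perp _).mp (hperp (Submodule.mem_map_of_mem hY)) w hw
      have hb3 : ω (J₃ Y) w = 0 := by
        rw [key]
        exact (mem_perp _).mp (hperp (Submodule.mem_map_of_mem hY)) _
          (W.neg_mem (hmem1 w hw))
      simp [smul_eq_mul, hb, hb3]
end
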